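/- Let Φ be a finite reduced crystallographic root system in a finite-dimensional real inner product space with a fixed base Δ. If U is a symmetric closed subset of Φ containing every simple root of Δ, then U = Φ. -/

import Mathlib

open scoped RealInnerProductSpace

/-- A finite reduced crystallographic root system in a finite-dimensional real
inner product space. -/
structure IsRootSystem {V : Type*} [NormedAddCommGroup V] [InnerProductSpace ℝ V]
    [FiniteDimensional ℝ V] (Φ : Set V) : Prop where
  finite : Φ.Finite
  ne_zero : ∀ α ∈ Φ, α ≠ 0
  spans : Submodule.span ℝ Φ = ⊤
  reduced : ∀ α ∈ Φ, ∀ t : ℝ, t • α ∈ Φ → t = 1 ∨ t = -1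
  reflection_mem : ∀ α ∈ Φ, ∀ β ∈ Φ, β - (2 * ⟪β, α⟫ / ⟪α, α⟫) • α ∈ Φ
  crystallographic : ∀ α ∈ Φ, ∀ β ∈ Φ, ∃ n : ℤ, 2 * ⟪β, α⟫ / ⟪α, α⟫ = (n : ℝ)

/-- A subset `S` of a root system `Φ` is closed if for any `x, y ∈ S`,
`x + y ∈ Φ` implies `x + y ∈ S`. -/
def IsClosedSubset {V : Type*} [NormedAddCommGroup V] [InnerProductSpace ℝ V]
    (Φ S : Set V) : Prop :=
  S ⊆ Φ ∧ ∀ x ∈ S, ∀ y ∈ S, x + y ∈ Φ → x + y ∈ S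

/-- A base (set of simple roots) of a root system `Φ`: a linearly independent
subset such that every root is an integer combination of elements of `Δ` with all
coefficients of the same sign. -/
def IsBase {V : Type*} [NormedAddCommGroup V] [InnerProductSpace ℝ V]
    (Φ Δ : Set V) : Prop :=
  Δ ⊆ Φ ∧ LinearIndependent ℝ ((↑) : Δ → V) ∧
    ∀ α ∈ Φ, ∃ c : V →₀ ℤ, (c.support : Set V) ⊆ Δ ∧
      α = c.sum (fun v n => (n : ℝ) • v) ∧ ((∀ v, 0 ≤ c v) ∨ (∀ v, c v ≤ 0))

/-- A root system is irreducible if it cannot be partitioned into two nonempty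
orthogonal subsets. -/
def IsIrreducibleRootSystem {V : Type*} [NormedAddCommGroup V] [InnerProductSpace ℝ V]
    (Φ : Set V) : Prop :=
  ¬ ∃ S T : Set V, S.Nonempty ∧ T.Nonempty ∧ Φ = S ∪ T ∧
      ∀ x ∈ S, ∀ y ∈ T, ⟪x, y⟫ = 0

/-- A simple root path: a finite sequence `β 0, β 1, …, β (k-1)` of pairwise
distinct simple roots in `Δ` such that consecutive roots are non-orthogonal. -/
def IsSimpleRootPath {V : Type*} [NormedAddCommGroup V] [InnerProductSpace ℝ V]
    (Δ : Set V) (k : ℕ) (β : ℕ → V) : Prop :=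
  1 ≤ k ∧ (∀ i < k, β i ∈ Δ) ∧ (∀ i < k, ∀ j < k, β i = β j → i = j) ∧
    ∀ i, i + 1 < k → ⟪β i, β (i + 1)⟫ ≠ 0

section Aux

variable {V : Type*} [NormedAddCommGroup V] [InnerProductSpace ℝ V]

/-- Integer-coefficient combination map, as an additive hom. -/
noncomputable def intComb : (V →₀ ℤ) →+ V :=
  Finsupp.liftAddHom fun v =>
    { toFun := fun n => (n : ℝ) • v
      map_zero' := by simp
      map_add' := fun m n => by push_cast; rw [add_smul] }

lemma intComb_apply (c : V →₀ ℤ) : intComb c = c.sum fun v n => (n : ℝ) • v := rfl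

lemma intComb_single (v : V) (n : ℤ) : intComb (Finsupp.single v n) = (n : ℝ) • v := by
  simp [intComb]

lemma intComb_eq_zero {Δ : Set V} (hli : LinearIndependent ℝ ((↑) : Δ → V))
    (e : V →₀ ℤ) (hsupp : (e.support : Set V) ⊆ Δ)
    (h : intComb e = 0) : e = 0 := by
  classical
  set l : V →₀ ℝ := e.mapRange (Int.cast) (by simp) with hl
  have hls : l ∈ Finsupp.supported ℝ ℝ Δ := by
    intro x hx
    apply hsupp
    simp only [hl, Finset.mem_coe, Finsupp.mem_support_iff, Finsupp.mapRange_apply] at hx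
    simp only [Finset.mem_coe, Finsupp.mem_support_iff]
    exact_mod_cast hx
  have hlc : Finsupp.linearCombination ℝ id l = 0 := by
    rw [Finsupp.linearCombination_apply]
    rw [hl, Finsupp.sum_mapRange_index (by simp)]
    simpa [intComb_apply] using h
  have h0 : l = 0 := linearIndepOn_iff.mp (linearIndependent_subtype_iff.mp hli) l hls hlc
  ext a
  have : l a = 0 := by rw [h0]; rfl
  rw [hl] at this
  simpa using this

end Aux

section Lemmas

variable {V : Type*} [NormedAddCommGroup V] [InnerProductSpace ℝ V] [FiniteDimensional ℝ V]
  {Φ : Set V}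

lemma IsRootSystem.inner_self_pos' (hΦ : IsRootSystem Φ) {γ : V} (hγ : γ ∈ Φ) :
    0 < ⟪γ, γ⟫ :=
  lt_of_not_ge fun h => hΦ.ne_zero γ hγ (real_inner_self_nonpos.mp h)

lemma IsRootSystem.neg_mem (hΦ : IsRootSystem Φ) {γ : V} (hγ : γ ∈ Φ) : -γ ∈ Φ := by
  have h := hΦ.reflection_mem γ hγ γ hγ
  have h0 : ⟪γ, γ⟫ ≠ 0 := ne_of_gt (hΦ.inner_self_pos' hγ)
  rw [mul_div_assoc, div_self h0, mul_one] at h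
  have : γ - (2 : ℝ) • γ = -γ := by
    rw [two_smul]; abel
  rwa [this] at h

lemma IsRootSystem.sub_mem_of_inner_pos (hΦ : IsRootSystem Φ) {α β : V}
    (hα : α ∈ Φ) (hβ : β ∈ Φ) (hne : α ≠ β) (hpos : 0 < ⟪α, β⟫) : α - β ∈ Φ := by
  obtain ⟨m, hm⟩ := hΦ.crystallographic β hβ α hα
  obtain ⟨n, hn⟩ := hΦ.crystallographic α hα β hβ
  have hαα : 0 < ⟪α, α⟫ := hΦ.inner_self_pos' hα
  have hββ : 0 < ⟪β, β⟫ := hΦ.inner_self_pos' hβ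
  have hβα : 0 < ⟪β, α⟫ := by rwa [real_inner_comm]
  have hmpos : (0 : ℝ) < (m : ℝ) := by
    rw [← hm]; positivity
  have hnpos : (0 : ℝ) < (n : ℝ) := by
    rw [← hn]; positivity
  have hm1 : 1 ≤ m := by exact_mod_cast hmpos
  have hn1 : 1 ≤ n := by exact_mod_cast hnpos
  have hcs : ⟪α, β⟫ * ⟪α, β⟫ ≤ ⟪α, α⟫ * ⟪β, β⟫ := real_inner_mul_inner_self_le α β
  have hmn : (m : ℝ) * (n : ℝ) ≤ 4 := by
    rw [← hm, ← hn]
    rw [div_mul_div_comm]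
    rw [div_le_iff₀ (by positivity)]
    have : ⟪β, α⟫ = ⟪α, β⟫ := real_inner_comm α β
    nlinarith [hcs]
  have hmn4 : m * n ≤ 4 := by exact_mod_cast hmn
  have hcases : m = 1 ∨ n = 1 ∨ (m = 2 ∧ n = 2) := by
    rcases eq_or_lt_of_le hm1 with h | h
    · left; omega
    rcases eq_or_lt_of_le hn1 with h' | h'
    · right; left; omega
    right; right
    constructor <;> nlinarith
  rcases hcases with h | h | ⟨h1, h2⟩
  · have := hΦ.reflection_mem β hβ α hα
    rw [hm, h] at this
    simpa using this
  · have := hΦ.reflection_mem α hα β hβ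
    rw [hn, h] at this
    simp only [Int.cast_one, one_smul] at this
    have := hΦ.neg_mem this
    simpa using this
  · exfalso
    apply hne
    have e1 : ⟪α, β⟫ = ⟪β, β⟫ := by
      have : 2 * ⟪α, β⟫ / ⟪β, β⟫ = 2 := by rw [hm, h1]; norm_num
      field_simp at this; linarith
    have e2 : ⟪β, α⟫ = ⟪α, α⟫ := by
      have : 2 * ⟪β, α⟫ / ⟪α, α⟫ = 2 := by rw [hn, h2]; norm_num
      field_simp at this; linarith
    have : ⟪α - β, α - β⟫ = 0 := by
      rw [inner_sub_sub_self]
      have : ⟪β, α⟫ = ⟪α, β⟫ := real_inner_comm α β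
      linarith
    have := inner_self_eq_zero.mp (by exact_mod_cast this)
    rwa [sub_eq_zero] at this

/-- Every "positive" root (all base coefficients nonnegative) lies in `U`. -/
lemma pos_root_mem {Φ Δ U : Set V} (hΦ : IsRootSystem Φ) (hΔ : IsBase Φ Δ)
    (hU : IsClosedSubset Φ U) (hΔU : Δ ⊆ U) :
    ∀ N : ℕ, ∀ α ∈ Φ, ∀ c : V →₀ ℤ, (c.support : Set V) ⊆ Δ →
      α = intComb c → (∀ v, 0 ≤ c v) → (c.sum fun _ m => m) = (N : ℤ) → α ∈ U := by
  classical
  intro N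
  induction N using Nat.strong_induction_on with
  | _ N IH =>
  intro α hα c hcsupp hceq hcpos hcsum
  -- existence of a simple root v with positive coefficient and positive inner product
  have hs' : α = ∑ v ∈ c.support, ((c v : ℤ) : ℝ) • v := by
    rw [hceq, intComb_apply, Finsupp.sum]
  have hinner : ⟪α, α⟫ = ∑ v ∈ c.support, (c v : ℝ) * ⟪α, v⟫ := by
    nth_rewrite 2 [hs']
    rw [inner_sum]
    exact Finset.sum_congr rfl fun v _ => real_inner_smul_right α v (c v)
  have hαα : 0 < ⟪α, α⟫ := hΦ.inner_self_pos' hα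
  have hex : ∃ v ∈ c.support, 0 < (c v : ℝ) * ⟪α, v⟫ := by
    by_contra hcon
    push_neg at hcon
    have : ⟪α, α⟫ ≤ 0 := by
      rw [hinner]
      exact Finset.sum_nonpos fun v hv => hcon v hv
    linarith
  obtain ⟨v, hvsupp, hvpos⟩ := hex
  have hvΔ : v ∈ Δ := hcsupp hvsupp
  have hvΦ : v ∈ Φ := hΔ.1 hvΔ
  have hcv0 : 0 ≤ c v := hcpos v
  have hcvR : (0:ℝ) ≤ (c v : ℝ) := by exact_mod_cast hcv0
  have hαv : 0 < ⟪α, v⟫ := by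
    rcases lt_or_eq_of_le hcvR with h | h
    · nlinarith
    · exfalso; rw [← h] at hvpos; simp at hvpos
  have hcv1 : 1 ≤ c v := by
    rcases lt_or_eq_of_le hcv0 with h | h
    · omega
    · exfalso
      rw [← h] at hvpos
      simp at hvpos
  by_cases hαΔ : α ∈ Δ
  · exact hΔU hαΔ
  -- α ≠ v and α - v is a root
  have hαnev : α ≠ v := fun h => hαΔ (h ▸ hvΔ)
  have hsub : α - v ∈ Φ := hΦ.sub_mem_of_inner_pos hα hvΦ hαnev hαv
  obtain ⟨d, hdsupp, hdeq, hdsign⟩ := hΔ.2.2 (α - v) hsub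
  have hdeq' : α - v = intComb d := by rw [hdeq, intComb_apply]
  -- uniqueness of coefficients: c = d + single v 1
  have hce : c = d + Finsupp.single v 1 := by
    have hzero : intComb (c - (d + Finsupp.single v 1)) = 0 := by
      rw [map_sub, map_add, intComb_single, ← hceq, ← hdeq']
      simp
    have hesupp : (((c - (d + Finsupp.single v 1)).support : Finset V) : Set V) ⊆ Δ := by
      intro x hx
      rw [Finset.mem_coe, Finsupp.mem_support_iff] at hx
      by_contra hxΔ
      apply hx
      have hcx : c x = 0 := by
        by_contra h
        exact hxΔ (hcsupp (Finsupp.mem_support_iff.mpr h))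
      have hdx : d x = 0 := by
        by_contra h
        exact hxΔ (hdsupp (Finsupp.mem_support_iff.mpr h))
      have hvx : v ≠ x := fun h => hxΔ (h ▸ hvΔ)
      simp [Finsupp.single_apply, hcx, hdx, hvx]
    have := intComb_eq_zero hΔ.2.1 _ hesupp hzero
    rwa [sub_eq_zero] at this
  rcases hdsign with hdpos | hdneg
  · -- heights
    have hsum_split : (c.sum fun _ m => m) = (d.sum fun _ m => m) + 1 := by
      rw [hce, Finsupp.sum_add_index' (fun _ => rfl) (fun _ b₁ b₂ => rfl)]
      rw [Finsupp.sum_single_index rfl]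
    have hN1 : 1 ≤ N := by
      have h1 : (c v : ℤ) ≤ c.sum fun _ m => m := by
        rw [Finsupp.sum]
        exact Finset.single_le_sum (fun w _ => hcpos w) hvsupp
      omega
    have hdsum : (d.sum fun _ m => m) = ((N - 1 : ℕ) : ℤ) := by
      push_cast [Nat.cast_sub hN1]
      omega
    have hmem : α - v ∈ U :=
      IH (N - 1) (by omega) (α - v) hsub d hdsupp hdeq' hdpos hdsum
    have := hU.2 (α - v) hmem v (hΔU hvΔ) (by rw [sub_add_cancel]; exact hα)
    rwa [sub_add_cancel] at this
  · -- all d ≤ 0 : then α = v, contradiction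
    exfalso
    have hcw : ∀ w, w ≠ v → c w = 0 := by
      intro w hw
      have h1 : c w = d w := by
        rw [hce]
        simp [Finsupp.single_apply, Ne.symm hw]
      have := hdneg w
      have := hcpos w
      omega
    have hcsingle : c = Finsupp.single v (c v) := by
      ext w
      by_cases h : w = v
      · subst h; simp [Finsupp.single_apply]
      · rw [hcw w h, Finsupp.single_apply, if_neg (fun hh => h hh.symm)]
    have hαv' : α = ((c v : ℤ) : ℝ) • v := by
      have h2 := intComb_single v (c v)
      rw [← hcsingle] at h2
      rw [hceq, h2]
    have := hΦ.reduced v hvΦ ((c v : ℤ) : ℝ) (by rw [← hαv']; exact hα)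
    rcases this with h | h
    · apply hαΔ
      rw [hαv', h, one_smul]
      exact hvΔ
    · have : (1:ℝ) ≤ ((c v : ℤ) : ℝ) := by exact_mod_cast hcv1
      rw [h] at this
      linarith

end Lemmas

/-- A symmetric closed subset of a root system containing every simple root is the
whole root system. -/
theorem symmetric_closed_subset_eq_of_base_subset {V : Type*} [NormedAddCommGroup V]
    [InnerProductSpace ℝ V] [FiniteDimensional ℝ V] (Φ Δ U : Set V)
    (hΦ : IsRootSystem Φ) (hΔ : IsBase Φ Δ) (hU : IsClosedSubset Φ U)
    (hsym : -U = U) (hΔU : Δ ⊆ U) : U = Φ := by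
  apply Set.Subset.antisymm hU.1
  intro α hα
  obtain ⟨c, hcsupp, hceq, hsign⟩ := hΔ.2.2 α hα
  have hceq' : α = intComb c := by rw [hceq, intComb_apply]
  rcases hsign with hpos | hneg
  · have hnn : 0 ≤ c.sum fun _ m => m := Finset.sum_nonneg fun w _ => hpos w
    exact pos_root_mem hΦ hΔ hU hΔU (c.sum fun _ m => m).toNat α hα c hcsupp hceq' hpos
      (Int.toNat_of_nonneg hnn).symm
  · have hnegα : -α ∈ Φ := hΦ.neg_mem hα
    have hsupp' : ((-c).support : Set V) ⊆ Δ := by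
      rw [Finsupp.support_neg]; exact hcsupp
    have heq' : -α = intComb (-c) := by rw [map_neg, ← hceq']
    have hpos' : ∀ w, 0 ≤ (-c) w := by
      intro w; have := hneg w; simp only [Finsupp.neg_apply]; omega
    have hnn : 0 ≤ (-c).sum fun _ m => m := Finset.sum_nonneg fun w _ => hpos' w
    have h1 : -α ∈ U := pos_root_mem hΦ hΔ hU hΔU ((-c).sum fun _ m => m).toNat (-α) hnegα
      (-c) hsupp' heq' hpos' (Int.toNat_of_nonneg hnn).symm
    rw [← hsym]
    simpa [Set.mem_neg] using h1
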